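/- Let r₁, r₂ > 0 with r₁ + r₂ > 2. Then there exist ξ₁, ξ₂ ∈ sp(2) such that α₁ ≠ 0, r₁γ₁ + r₂γ₂ = 0, β₁ + (3-2r₁)α₁ = 0, and β₂ + (3-2r₂)α₂ = 0; consequently the sectional curvature expression (1/4)|r₁γ₁+r₂γ₂|² + (r₁/8)|β₁+(3-2r₁)α₁|² + (r₂/8)|β₂+(3-2r₂)α₂|² + (1/2)((1-r₁)³+(1-r₂)³)|α₁|² is strictly negative for this pair. -/

import Mathlib

open Quaternion

set_option maxHeartbeats 1000000 in
/-- If r₁ + r₂ > 2, there is a pair ξ₁, ξ₂ ∈ sp(2) making all nonnegative terms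
of the sectional-curvature expression vanish while α₁ ≠ 0, so the sectional
curvature expression is strictly negative. -/
theorem sp2_curvature_negative (r₁ r₂ : ℝ) (h₁ : 0 < r₁) (h₂ : 0 < r₂)
    (h : 2 < r₁ + r₂) :
    ∃ x₁ y₁ z₁ x₂ y₂ z₂ : ℍ[ℝ],
      x₁.re = 0 ∧ z₁.re = 0 ∧ x₂.re = 0 ∧ z₂.re = 0 ∧
      (let α₁ : ℍ[ℝ] := y₂ * star y₁ - y₁ * star y₂
       let α₂ : ℍ[ℝ] := star y₂ * y₁ - star y₁ * y₂
       let β₁ : ℍ[ℝ] := x₁ * x₂ - x₂ * x₁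
       let β₂ : ℍ[ℝ] := z₁ * z₂ - z₂ * z₁
       let γ₁ : ℍ[ℝ] := x₁ * y₂ - x₂ * y₁
       let γ₂ : ℍ[ℝ] := y₁ * z₂ - y₂ * z₁
       α₁ ≠ 0 ∧ r₁ • γ₁ + r₂ • γ₂ = 0 ∧ β₁ + (3 - 2 * r₁) • α₁ = 0 ∧
         β₂ + (3 - 2 * r₂) • α₂ = 0 ∧
       (1 / 4) * ‖r₁ • γ₁ + r₂ • γ₂‖ ^ 2 + (r₁ / 8) * ‖β₁ + (3 - 2 * r₁) • α₁‖ ^ 2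
         + (r₂ / 8) * ‖β₂ + (3 - 2 * r₂) • α₂‖ ^ 2
         + (1 / 2) * ((1 - r₁) ^ 3 + (1 - r₂) ^ 3) * ‖α₁‖ ^ 2 < 0) := by
  set m₁ : ℝ := 2 * r₁ - 3 with hm₁
  set m₂ : ℝ := 2 * r₂ - 3 with hm₂
  set T : ℝ := max 1 (max (1 + m₁) (r₂ / r₁ * (1 + m₂))) with hT
  have hT1 : (1:ℝ) ≤ T := le_max_left _ _
  have hT0 : 0 < T := lt_of_lt_of_le one_pos hT1
  have hTm : 1 + m₁ ≤ T := le_trans (le_max_left _ _) (le_max_right _ _)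
  have hTsq : 4 * m₁ ≤ T ^ 2 := by nlinarith [sq_nonneg (1 - m₁), sq_nonneg T]
  set S : ℝ := r₁ / r₂ * T with hS
  have hS0 : 0 < S := by positivity
  have hSm : 1 + m₂ ≤ S := by
    rcases le_or_gt (1 + m₂) 0 with hc | hc
    · linarith
    · have h1 : r₂ / r₁ * (1 + m₂) ≤ T := le_trans (le_max_right _ _) (le_max_right _ _)
      have := mul_le_mul_of_nonneg_left h1 (le_of_lt (div_pos h₁ h₂))
      calc 1 + m₂ = r₁ / r₂ * (r₂ / r₁ * (1 + m₂)) := by field_simp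
        _ ≤ r₁ / r₂ * T := this
  have hSsq : 4 * m₂ ≤ S ^ 2 := by nlinarith [sq_nonneg (1 - m₂), sq_nonneg S]
  set D₁ : ℝ := Real.sqrt (T ^ 2 - 4 * m₁) with hD₁
  set D₂ : ℝ := Real.sqrt (S ^ 2 - 4 * m₂) with hD₂
  have hD₁sq : D₁ ^ 2 = T ^ 2 - 4 * m₁ := Real.sq_sqrt (by linarith)
  have hD₂sq : D₂ ^ 2 = S ^ 2 - 4 * m₂ := Real.sq_sqrt (by linarith)
  set a : ℝ := (T + D₁) / 2 with ha
  set c : ℝ := (T - D₁) / 2 with hc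
  set b : ℝ := (S + D₂) / 2 with hb
  set d : ℝ := (S - D₂) / 2 with hd
  have hac : a * c = m₁ := by rw [ha, hc]; nlinarith [hD₁sq]
  have hbd : b * d = m₂ := by rw [hb, hd]; nlinarith [hD₂sq]
  have hacs : a + c = T := by rw [ha, hc]; ring
  have hbds : b + d = S := by rw [hb, hd]; ring
  have hbal : r₂ * (b + d) = r₁ * (a + c) := by
    rw [hacs, hbds, hS]; field_simp
  have hneg : (1 - r₁) ^ 3 + (1 - r₂) ^ 3 < 0 := by
    have hab : (1 - r₁) + (1 - r₂) < 0 := by linarith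
    have hpos : 0 < (1 - r₁) ^ 2 - (1 - r₁) * (1 - r₂) + (1 - r₂) ^ 2 := by
      nlinarith [sq_nonneg ((1 - r₁) - (1 - r₂)), sq_nonneg ((1 - r₁) + (1 - r₂)),
        sq_nonneg (1 - r₁), sq_nonneg (1 - r₂)]
    nlinarith [mul_pos (neg_pos.2 hab) hpos]
  clear_value D₁ D₂
  clear_value a b c d
  clear hD₁ hD₂ hD₁sq hD₂sq hTsq hSsq hSm hTm hT1 hT0 hS0
  clear_value S T
  clear_value m₁ m₂
  refine ⟨⟨0, a, 0, 0⟩, ⟨0, 0, -1, 0⟩, ⟨0, b, 0, 0⟩, ⟨0, 0, c, 0⟩, ⟨0, 1, 0, 0⟩,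
    ⟨0, 0, d, 0⟩, rfl, rfl, rfl, rfl, ?_⟩
  dsimp only
  have hα₁ : ((⟨0, 1, 0, 0⟩ : ℍ[ℝ]) * star (⟨0, 0, -1, 0⟩ : ℍ[ℝ])
      - (⟨0, 0, -1, 0⟩ : ℍ[ℝ]) * star (⟨0, 1, 0, 0⟩ : ℍ[ℝ])) = (⟨0, 0, 0, 2⟩ : ℍ[ℝ]) := by
    ext <;> simp <;> ring
  have hγ : r₁ • ((⟨0, a, 0, 0⟩ : ℍ[ℝ]) * ⟨0, 1, 0, 0⟩ - (⟨0, 0, c, 0⟩ : ℍ[ℝ]) * ⟨0, 0, -1, 0⟩)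
      + r₂ • ((⟨0, 0, -1, 0⟩ : ℍ[ℝ]) * ⟨0, 0, d, 0⟩ - (⟨0, 1, 0, 0⟩ : ℍ[ℝ]) * ⟨0, b, 0, 0⟩) = 0 := by
    ext <;> simp <;> nlinarith [hbal]
  have hβ₁ : ((⟨0, a, 0, 0⟩ : ℍ[ℝ]) * ⟨0, 0, c, 0⟩ - (⟨0, 0, c, 0⟩ : ℍ[ℝ]) * ⟨0, a, 0, 0⟩)
      + (3 - 2 * r₁) • ((⟨0, 1, 0, 0⟩ : ℍ[ℝ]) * star (⟨0, 0, -1, 0⟩ : ℍ[ℝ])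
      - (⟨0, 0, -1, 0⟩ : ℍ[ℝ]) * star (⟨0, 1, 0, 0⟩ : ℍ[ℝ])) = 0 := by
    ext <;> simp <;> nlinarith [hac]
  have hβ₂ : ((⟨0, b, 0, 0⟩ : ℍ[ℝ]) * ⟨0, 0, d, 0⟩ - (⟨0, 0, d, 0⟩ : ℍ[ℝ]) * ⟨0, b, 0, 0⟩)
      + (3 - 2 * r₂) • (star (⟨0, 1, 0, 0⟩ : ℍ[ℝ]) * ⟨0, 0, -1, 0⟩
      - star (⟨0, 0, -1, 0⟩ : ℍ[ℝ]) * ⟨0, 1, 0, 0⟩) = 0 := by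
    ext <;> simp <;> nlinarith [hbd]
  refine ⟨?_, hγ, hβ₁, hβ₂, ?_⟩
  · erw [hα₁]
    intro hcon
    have := congrArg QuaternionAlgebra.imK hcon
    simp at this
  · erw [hγ, hβ₁, hβ₂, hα₁]
    have key := Quaternion.normSq_eq_norm_mul_self (⟨0, 0, 0, 2⟩ : ℍ[ℝ])
    erw [Quaternion.normSq_def'] at key
    norm_num at key
    erw [norm_zero]
    nlinarith [key, hneg]
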